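/- For the upper-bound capacity model, every feasible assignment has the same total capacity: if β ∈ [0,1]ⁿ satisfies Σᵢ (βᵢ - ᾱ)·c^UB(βᵢ) = 0, then Σᵢ c^UB(βᵢ) = n·c^UB(ᾱ). -/

import Mathlib

/-- Under the upper-bound capacity model, every feasible assignment has the
same total capacity `n·c^UB(ᾱ)`. -/
theorem upper_bound_capacity_invariant
    (n : ℕ) (hn : 1 ≤ n) (abar d L h hb : ℝ)
    (habar : abar ∈ Set.Icc (0 : ℝ) 1)
    (hd : 0 < d) (hL : 0 < L) (hhb : 0 ≤ hb) (hbh : hb ≤ h) (hLhb : 0 < L + hb)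
    (cUB : ℝ → ℝ) (hcUB : ∀ β, cUB β = d / (L + β * hb + (1 - β) * h)) :
    ∀ βs : Fin n → ℝ, (∀ i, βs i ∈ Set.Icc (0 : ℝ) 1) →
      (∑ i, (βs i - abar) * cUB (βs i) = 0) →
      ∑ i, cUB (βs i) = (n : ℝ) * cUB abar := by
  intro βs hβs hfeas
  have hD : ∀ β : ℝ, β ∈ Set.Icc (0 : ℝ) 1 → 0 < L + β * hb + (1 - β) * h := by
    intro β hβ
    have h1 : L + hb ≤ L + β * hb + (1 - β) * h := by
      nlinarith [hβ.1, hβ.2]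
    linarith
  have hDa := hD abar habar
  -- per-term identity
  have key : ∀ i, cUB (βs i) - cUB abar
      = ((h - hb) / (L + abar * hb + (1 - abar) * h)) * ((βs i - abar) * cUB (βs i)) := by
    intro i
    have hDi := hD (βs i) (hβs i)
    rw [hcUB, hcUB]
    rw [div_sub_div _ _ hDi.ne' hDa.ne', div_eq_iff (mul_ne_zero hDi.ne' hDa.ne')]
    have e1 := div_mul_cancel₀ d hDi.ne'
    have e2 := div_mul_cancel₀ (h - hb) hDa.ne'
    linear_combination (-(βs i - abar) * ((h - hb) / (L + abar * hb + (1 - abar) * h))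
      * (L + abar * hb + (1 - abar) * h)) * e1 - ((βs i - abar) * d) * e2
  have hsum : ∑ i, (cUB (βs i) - cUB abar)
      = ((h - hb) / (L + abar * hb + (1 - abar) * h)) * ∑ i, (βs i - abar) * cUB (βs i) := by
    rw [Finset.mul_sum]
    exact Finset.sum_congr rfl fun i _ => key i
  rw [hfeas, mul_zero] at hsum
  have := Finset.sum_sub_distrib (f := fun i => cUB (βs i)) (g := fun _ : Fin n => cUB abar)
    (s := Finset.univ)
  rw [this] at hsum
  simp only [Finset.sum_const, Finset.card_univ, Fintype.card_fin, nsmul_eq_mul] at hsum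
  linarith
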